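/- Let m, n ≥ 1 be integers, D ⊆ ℝ² open, w ∈ D, and let h : D → ℂ be (m+n) times continuously differentiable. Then there exist constants C > 0 and δ > 0 such that for all z = (x, y) ∈ D with 0 < |z − w| < δ: |h(z) − Σ_{k=0}^{m−1} Σ_{l=0}^{n−1} (1/(k! l!)) (∂^{k+l} h/∂x^k ∂y^l)(w) (x − w₁)^k (y − w₂)^l| ≤ C · max(|x − w₁|^m, |y − w₂|^n), where w = (w₁, w₂). -/

import Mathlib

open Set Metric Function


private lemma slice_lemma (v p₀ : ℝ × ℝ) :
    ∀ (l : ℕ) {F : Type} [NormedAddCommGroup F] [NormedSpace ℝ F]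
      (f : ℝ × ℝ → F) (U : Set (ℝ × ℝ)), IsOpen U →
      ContDiffOn ℝ l f U → ∀ (y : ℝ), p₀ + y • v ∈ U →
      iteratedDerivWithin l (fun t => f (p₀ + t • v)) ((fun t => p₀ + t • v) ⁻¹' U) y
        = iteratedFDerivWithin ℝ l f U (p₀ + y • v) (fun _ => v) := by
  intro l
  induction l with
  | zero =>
    intro F _ _ f U hU hf y hy
    simp [iteratedDerivWithin_zero, iteratedFDerivWithin_zero_apply]
  | succ l IH =>
    intro F _ _ f U hU hf y hy
    have hcs : ContDiff ℝ l (fun t : ℝ => p₀ + t • v) :=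
      contDiff_const.add (contDiff_id.smul contDiff_const)
    have hO : IsOpen ((fun t : ℝ => p₀ + t • v) ⁻¹' U) :=
      hU.preimage hcs.continuous
    have hyO : y ∈ (fun t : ℝ => p₀ + t • v) ⁻¹' U := hy
    set g : (ℝ × ℝ) → ((ℝ × ℝ) →L[ℝ] F) := fderivWithin ℝ f U with hgdef
    have hg : ContDiffOn ℝ l g U :=
      hf.fderivWithin hU.uniqueDiffOn (by exact_mod_cast le_refl (l + 1 : ℕ))
    have hEq : Set.EqOn (derivWithin (fun t => f (p₀ + t • v)) ((fun t : ℝ => p₀ + t • v) ⁻¹' U))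
        (fun t => g (p₀ + t • v) v) ((fun t : ℝ => p₀ + t • v) ⁻¹' U) := by
      intro t ht
      have hc : HasDerivAt (fun t : ℝ => p₀ + t • v) v t := by
        simpa using ((hasDerivAt_id t).smul_const v).const_add p₀
      have hdiff : DifferentiableAt ℝ f (p₀ + t • v) := by
        have := (hf.differentiableOn (by simp)) _ ht
        exact this.differentiableAt (hU.mem_nhds ht)
      have hfd : HasFDerivAt f (g (p₀ + t • v)) (p₀ + t • v) := by
        rw [hgdef, fderivWithin_of_isOpen hU ht]
        exact hdiff.hasFDerivAt
      have hcomp : HasDerivAt (fun t : ℝ => f (p₀ + t • v)) (g (p₀ + t • v) v) t :=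
        hfd.comp_hasDerivAt t hc
      rw [derivWithin_of_isOpen hO ht]
      exact hcomp.deriv
    have hφ : ContDiffOn ℝ l (fun t : ℝ => g (p₀ + t • v)) ((fun t : ℝ => p₀ + t • v) ⁻¹' U) :=
      hg.comp (hcs.contDiffOn) (fun t ht => ht)
    calc iteratedDerivWithin (l+1) (fun t => f (p₀ + t • v)) ((fun t : ℝ => p₀ + t • v) ⁻¹' U) y
        = iteratedDerivWithin l
            (derivWithin (fun t => f (p₀ + t • v)) ((fun t : ℝ => p₀ + t • v) ⁻¹' U))
            ((fun t : ℝ => p₀ + t • v) ⁻¹' U) y :=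
          congrFun iteratedDerivWithin_succ' y
      _ = iteratedDerivWithin l (fun t => g (p₀ + t • v) v)
            ((fun t : ℝ => p₀ + t • v) ⁻¹' U) y :=
          iteratedDerivWithin_congr hEq hyO
      _ = (ContinuousLinearMap.apply ℝ F v) (iteratedDerivWithin l (fun t : ℝ => g (p₀ + t • v))
            ((fun t : ℝ => p₀ + t • v) ⁻¹' U) y) := by
          have e1 : (fun t : ℝ => g (p₀ + t • v) v)
              = (ContinuousLinearMap.apply ℝ F v) ∘ (fun t : ℝ => g (p₀ + t • v)) := rfl
          rw [iteratedDerivWithin_eq_iteratedFDerivWithin,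
            iteratedDerivWithin_eq_iteratedFDerivWithin, e1,
            (ContinuousLinearMap.apply ℝ F v).iteratedFDerivWithin_comp_left (hφ y hyO)
              hO.uniqueDiffOn hyO (by exact_mod_cast le_refl l)]
          simp
      _ = (iteratedFDerivWithin ℝ l g U (p₀ + y • v) (fun _ => v)) v := by
          rw [IH g U hU hg y hy]
          rfl
      _ = iteratedFDerivWithin ℝ (l+1) f U (p₀ + y • v) (fun _ => v) := by
          rw [iteratedFDerivWithin_succ_apply_right hU.uniqueDiffOn hy]
          have e2 : Fin.init (fun _ : Fin (l+1) => v) = fun _ : Fin l => v := by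
            funext i; simp [Fin.init]
          rw [e2]


private lemma mixed_lemma (k : ℕ) :
    ∀ (l : ℕ) {F : Type} [NormedAddCommGroup F] [NormedSpace ℝ F]
      (f : ℝ × ℝ → F) (U : Set (ℝ × ℝ)), IsOpen U →
      ContDiffOn ℝ (k + l : ℕ) f U → ∀ p ∈ U,
      iteratedFDerivWithin ℝ (k + l) f U p
          (fun i => if (i : ℕ) < k then ((1, 0) : ℝ × ℝ) else ((0, 1) : ℝ × ℝ))
        = iteratedFDerivWithin ℝ k
            (fun q => iteratedFDerivWithin ℝ l f U q (fun _ => ((0, 1) : ℝ × ℝ))) U p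
            (fun _ => ((1, 0) : ℝ × ℝ)) := by
  intro l
  induction l with
  | zero =>
    intro F _ _ f U hU hf p hp
    have e1 : (fun q => iteratedFDerivWithin ℝ 0 f U q (fun _ => ((0, 1) : ℝ × ℝ))) = f := by
      funext q; exact iteratedFDerivWithin_zero_apply _
    have e2 : (fun i : Fin (k + 0) => if (i : ℕ) < k then ((1, 0) : ℝ × ℝ) else (0, 1))
        = fun _ => ((1, 0) : ℝ × ℝ) := by
      funext i
      exact if_pos i.isLt
    rw [e1, e2]
    rfl
  | succ l IH =>
    intro F _ _ f U hU hf p hp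
    set g : (ℝ × ℝ) → ((ℝ × ℝ) →L[ℝ] F) := fun q => fderivWithin ℝ f U q with hgdef
    have hg : ContDiffOn ℝ (k + l : ℕ) g U := by
      apply hf.fderivWithin hU.uniqueDiffOn
      exact_mod_cast le_refl (k + l + 1 : ℕ)
    set A : ((ℝ × ℝ) →L[ℝ] F) →L[ℝ] F := ContinuousLinearMap.apply ℝ F ((0, 1) : ℝ × ℝ)
      with hAdef
    have hφ : ContDiffOn ℝ k
        (fun q => iteratedFDerivWithin ℝ l g U q (fun _ => ((0, 1) : ℝ × ℝ))) U := by
      have h1 : ContDiffOn ℝ k (iteratedFDerivWithin ℝ l g U) U := fun q hq =>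
        (hg q hq).iteratedFDerivWithin_right hU.uniqueDiffOn
          (by exact_mod_cast le_refl (k + l : ℕ)) hq
      exact ContDiffOn.continuousLinearMap_comp
        (ContinuousMultilinearMap.apply ℝ (fun _ : Fin l => (ℝ × ℝ)) ((ℝ × ℝ) →L[ℝ] F)
          (fun _ => ((0, 1) : ℝ × ℝ))) h1
    calc iteratedFDerivWithin ℝ (k + (l+1)) f U p
          (fun i => if (i : ℕ) < k then ((1, 0) : ℝ × ℝ) else (0, 1))
        = iteratedFDerivWithin ℝ (k + l) g U p
            (Fin.init (fun i : Fin (k + l + 1) =>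
              if (i : ℕ) < k then ((1, 0) : ℝ × ℝ) else (0, 1)))
            ((fun i : Fin (k + l + 1) =>
              if (i : ℕ) < k then ((1, 0) : ℝ × ℝ) else (0, 1)) (Fin.last (k + l))) :=
          iteratedFDerivWithin_succ_apply_right hU.uniqueDiffOn hp _
      _ = (iteratedFDerivWithin ℝ (k + l) g U p
            (fun i : Fin (k + l) => if (i : ℕ) < k then ((1, 0) : ℝ × ℝ) else (0, 1)))
            ((0, 1) : ℝ × ℝ) := by
          have e1 : Fin.init (fun i : Fin (k + l + 1) =>
              if (i : ℕ) < k then ((1, 0) : ℝ × ℝ) else (0, 1))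
              = fun i : Fin (k + l) => if (i : ℕ) < k then ((1, 0) : ℝ × ℝ) else (0, 1) := by
            funext i; simp [Fin.init]
          have e2 : (fun i : Fin (k + l + 1) =>
              if (i : ℕ) < k then ((1, 0) : ℝ × ℝ) else (0, 1)) (Fin.last (k + l))
              = ((0, 1) : ℝ × ℝ) := by
            simp [Fin.last]
          rw [e1, e2]
      _ = A ((iteratedFDerivWithin ℝ k
            (fun q => iteratedFDerivWithin ℝ l g U q (fun _ => ((0, 1) : ℝ × ℝ))) U p)
            (fun _ => ((1, 0) : ℝ × ℝ))) := by
          rw [IH g U hU hg p hp]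
          rfl
      _ = (iteratedFDerivWithin ℝ k
            (A ∘ (fun q => iteratedFDerivWithin ℝ l g U q (fun _ => ((0, 1) : ℝ × ℝ)))) U p)
            (fun _ => ((1, 0) : ℝ × ℝ)) := by
          rw [A.iteratedFDerivWithin_comp_left (i := k) (hφ p hp) hU.uniqueDiffOn hp
            (by exact_mod_cast le_refl k)]
          simp
      _ = iteratedFDerivWithin ℝ k
            (fun q => iteratedFDerivWithin ℝ (l + 1) f U q (fun _ => ((0, 1) : ℝ × ℝ))) U p
            (fun _ => ((1, 0) : ℝ × ℝ)) := by
          congr 1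
          apply iteratedFDerivWithin_congr (fun q hq => ?_) hp
          have := iteratedFDerivWithin_succ_apply_right (𝕜 := ℝ) (f := f) hU.uniqueDiffOn hq
            (fun _ : Fin (l + 1) => ((0, 1) : ℝ × ℝ))
          have e3 : Fin.init (fun _ : Fin (l + 1) => ((0, 1) : ℝ × ℝ))
              = fun _ : Fin l => ((0, 1) : ℝ × ℝ) := by
            funext i; simp [Fin.init]
          rw [e3] at this
          simp only [comp_apply]
          rw [this]
          rfl


private lemma taylor_bound {E : Type} [NormedAddCommGroup E] [NormedSpace ℝ E]
    {f : ℝ → E} {O : Set ℝ} (hO : IsOpen O) {n : ℕ}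
    (hf : ContDiffOn ℝ (n + 1 : ℕ) f O) {a r C : ℝ} (hr : 0 < r)
    (hIcc : Icc (a - r) (a + r) ⊆ O)
    (hC : ∀ t ∈ Icc (a - r) (a + r), ‖iteratedDerivWithin (n + 1) f O t‖ ≤ C) :
    ∀ x ∈ Icc (a - r) (a + r),
      ‖f x - ∑ k ∈ Finset.range (n + 1),
          (((k.factorial : ℝ))⁻¹ * (x - a) ^ k) • iteratedDerivWithin k f O a‖
        ≤ C * |x - a| ^ (n + 1) := by
  intro x hx
  have haI : a ∈ Icc (a - r) (a + r) := ⟨by linarith, by linarith⟩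
  have hC0 : 0 ≤ C := le_trans (norm_nonneg _) (hC a haI)
  have hsub : Icc (min a x) (max a x) ⊆ Icc (a - r) (a + r) := by
    intro t ht
    rcases le_total a x with hax | hax
    · rw [min_eq_left hax, max_eq_right hax] at ht
      exact ⟨by linarith [ht.1], by linarith [ht.2, hx.2]⟩
    · rw [min_eq_right hax, max_eq_left hax] at ht
      exact ⟨by linarith [ht.1, hx.1], by linarith [ht.2]⟩
  have hxt : ∀ t ∈ Icc (min a x) (max a x), |x - t| ≤ |x - a| := by
    intro t ht
    rcases le_total a x with hax | hax
    · rw [min_eq_left hax, max_eq_right hax] at ht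
      rw [abs_of_nonneg (by linarith [ht.2]), abs_of_nonneg (by linarith)]
      linarith [ht.1]
    · rw [min_eq_right hax, max_eq_left hax] at ht
      rw [abs_of_nonpos (by linarith [ht.1]), abs_of_nonpos (by linarith)]
      linarith [ht.2]
  set g : ℝ → E := fun t => taylorWithinEval f n O t x with hgdef
  have hf' : DifferentiableOn ℝ (iteratedDerivWithin n f O) O :=
    hf.differentiableOn_iteratedDerivWithin (by exact_mod_cast Nat.lt_succ_self n)
      hO.uniqueDiffOn
  have A : ∀ t ∈ Icc (min a x) (max a x),
      HasDerivWithinAt g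
        (((n.factorial : ℝ)⁻¹ * (x - t) ^ n) • iteratedDerivWithin (n + 1) f O t)
        (Icc (min a x) (max a x)) t := by
    intro t ht
    have htO : t ∈ O := hIcc (hsub ht)
    have hd := hasDerivWithinAt_taylorWithinEval (s := O) (s' := O) (x := x)
      hO.uniqueDiffOn self_mem_nhdsWithin htO rfl.subset
      (hf.of_le (by exact_mod_cast Nat.le_succ n)) (hf' t htO)
    exact ((hd.hasDerivAt (hO.mem_nhds htO)).hasDerivWithinAt)
  have bound : ∀ t ∈ Ico (min a x) (max a x),
      ‖((n.factorial : ℝ)⁻¹ * (x - t) ^ n) • iteratedDerivWithin (n + 1) f O t‖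
        ≤ (n.factorial : ℝ)⁻¹ * |x - a| ^ n * C := by
    intro t ht
    have ht' : t ∈ Icc (min a x) (max a x) := Ico_subset_Icc_self ht
    rw [norm_smul, Real.norm_eq_abs, abs_mul, abs_pow,
      abs_inv, Nat.abs_cast]
    have h1 : |x - t| ^ n ≤ |x - a| ^ n := pow_le_pow_left₀ (abs_nonneg _) (hxt t ht') n
    have h2 : ‖iteratedDerivWithin (n + 1) f O t‖ ≤ C := hC t (hsub ht')
    have h3 : (0 : ℝ) < (n.factorial : ℝ) := by exact_mod_cast n.factorial_pos
    gcongr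
  have MVT := norm_image_sub_le_of_norm_deriv_le_segment' A bound (max a x)
    (right_mem_Icc.2 (min_le_max))
  have hga : g a = ∑ k ∈ Finset.range (n + 1),
      (((k.factorial : ℝ))⁻¹ * (x - a) ^ k) • iteratedDerivWithin k f O a :=
    taylor_within_apply f n O a x
  have hgx : g x = f x := taylorWithinEval_self f n O x
  have key : ‖f x - g a‖ ≤ ((n.factorial : ℝ)⁻¹ * |x - a| ^ n * C) * |x - a| := by
    rcases le_total a x with hax | hax
    · have := MVT
      rw [min_eq_left hax, max_eq_right hax] at this
      rw [hgx] at this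
      calc ‖f x - g a‖ ≤ (n.factorial : ℝ)⁻¹ * |x - a| ^ n * C * (x - a) := this
        _ = (n.factorial : ℝ)⁻¹ * |x - a| ^ n * C * |x - a| := by
            rw [abs_of_nonneg (by linarith)]
    · have := MVT
      rw [min_eq_right hax, max_eq_left hax] at this
      rw [hgx] at this
      rw [norm_sub_rev] at this
      calc ‖f x - g a‖ ≤ (n.factorial : ℝ)⁻¹ * |x - a| ^ n * C * (a - x) := this
        _ = (n.factorial : ℝ)⁻¹ * |x - a| ^ n * C * |x - a| := by
            rw [abs_of_nonpos (by linarith), neg_sub]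
  rw [hga] at key
  calc ‖f x - ∑ k ∈ Finset.range (n + 1),
        (((k.factorial : ℝ))⁻¹ * (x - a) ^ k) • iteratedDerivWithin k f O a‖
      ≤ ((n.factorial : ℝ)⁻¹ * |x - a| ^ n * C) * |x - a| := key
    _ ≤ C * |x - a| ^ (n + 1) := by
        rw [pow_succ]
        have h1n : (1 : ℝ) ≤ (n.factorial : ℝ) := by
          exact_mod_cast n.factorial_pos
        have hfac : (n.factorial : ℝ)⁻¹ ≤ 1 := by
          rw [inv_le_one_iff₀]
          exact Or.inr h1n
        have hP : (0 : ℝ) ≤ |x - a| ^ n := pow_nonneg (abs_nonneg _) n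
        have hQ : (0 : ℝ) ≤ |x - a| := abs_nonneg _
        calc (n.factorial : ℝ)⁻¹ * |x - a| ^ n * C * |x - a|
            ≤ 1 * |x - a| ^ n * C * |x - a| := by gcongr
          _ = C * (|x - a| ^ n * |x - a|) := by ring
/-- Taylor approximation adapted to the rectangle scale: if `h : D → ℂ`
(`D ⊆ ℝ²` open, `w ∈ D`) is `(m+n)` times continuously differentiable, then near `w`,
`h(z) - Σ_{k<m} Σ_{l<n} (1/(k!l!)) ∂^{k+l}h/∂x^k∂y^l(w) (x-w₁)^k (y-w₂)^l`
is bounded by `C·max(|x-w₁|^m, |y-w₂|^n)`. -/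
theorem stmt_11 (m n : ℕ) (hm : 1 ≤ m) (hn : 1 ≤ n)
    (D : Set (ℝ × ℝ)) (hD : IsOpen D) (w : ℝ × ℝ) (hw : w ∈ D)
    (h : ℝ × ℝ → ℂ) (hh : ContDiffOn ℝ (m + n : ℕ) h D) :
    ∃ C > (0 : ℝ), ∃ δ > (0 : ℝ), ∀ z ∈ D, z ≠ w → ‖z - w‖ < δ →
      ‖h z - ∑ k ∈ Finset.range m, ∑ l ∈ Finset.range n,
          (((k.factorial * l.factorial : ℕ) : ℂ))⁻¹ *
            iteratedFDerivWithin ℝ (k + l) h D w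
              (fun i => if (i : ℕ) < k then ((1, 0) : ℝ × ℝ) else ((0, 1) : ℝ × ℝ)) *
            ((z.1 - w.1 : ℝ) : ℂ) ^ k * ((z.2 - w.2 : ℝ) : ℂ) ^ l‖ ≤
        C * max (|z.1 - w.1| ^ m) (|z.2 - w.2| ^ n) := by
  classical
  obtain ⟨n', rfl⟩ : ∃ n', n = n' + 1 := ⟨n - 1, by omega⟩
  obtain ⟨m', rfl⟩ : ∃ m', m = m' + 1 := ⟨m - 1, by omega⟩
  set n := n' + 1
  set m := m' + 1
  obtain ⟨r, hr0, hrD⟩ := Metric.isOpen_iff.1 hD w hw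
  set ε : ℝ := min (r / 4) 1 with hεdef
  have hε0 : 0 < ε := lt_min (by linarith) one_pos
  have hε1 : ε ≤ 1 := min_le_right _ _
  have hεr : 2 * ε < r := by
    have : ε ≤ r / 4 := min_le_left _ _
    linarith
  have hKD : closedBall w (2 * ε) ⊆ D := fun p hp =>
    hrD (lt_of_le_of_lt (mem_closedBall.1 hp) hεr)
  have hUD : UniqueDiffOn ℝ D := hD.uniqueDiffOn
  have hK : IsCompact (closedBall w (2 * ε)) := isCompact_closedBall _ _
  have hwK : w ∈ closedBall w (2 * ε) := mem_closedBall_self (by linarith)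
  -- basis vector norms
  have hnorm2 : ‖((0, 1) : ℝ × ℝ)‖ = 1 := by simp [Prod.norm_def]
  have hnorm1 : ‖((1, 0) : ℝ × ℝ)‖ = 1 := by simp [Prod.norm_def]
  have hpt2 : ∀ x t : ℝ, ((x, 0) : ℝ × ℝ) + t • ((0, 1) : ℝ × ℝ) = (x, t) := by
    intro x t; ext <;> simp
  have hpt1 : ∀ t b : ℝ, ((0, b) : ℝ × ℝ) + t • ((1, 0) : ℝ × ℝ) = (t, b) := by
    intro t b; ext <;> simp
  -- the directional derivative functions
  set G : ℕ → (ℝ × ℝ) → ℂ :=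
    fun l p => iteratedFDerivWithin ℝ l h D p (fun _ => ((0, 1) : ℝ × ℝ)) with hGdef
  have hGsm : ∀ l : ℕ, l ≤ n → ContDiffOn ℝ m (G l) D := by
    intro l hl
    have h1 : ContDiffOn ℝ m (iteratedFDerivWithin ℝ l h D) D := fun p hp =>
      (hh p hp).iteratedFDerivWithin_right hUD
        (by exact_mod_cast (by omega : m + l ≤ m + n)) hp
    exact ContDiffOn.continuousLinearMap_comp
      (ContinuousMultilinearMap.apply ℝ (fun _ : Fin l => (ℝ × ℝ)) ℂ
        (fun _ => ((0, 1) : ℝ × ℝ))) h1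
  -- bounds on compact square
  obtain ⟨B₀, hB₀⟩ := hK.exists_bound_of_continuousOn
    ((hh.continuousOn_iteratedFDerivWithin (m := n)
      (by exact_mod_cast Nat.le_add_left n m) hUD).mono hKD)
  set B₁ : ℝ := max B₀ 0 with hB₁def
  have hB₁0 : 0 ≤ B₁ := le_max_right _ _
  have hB₁ : ∀ q ∈ closedBall w (2 * ε), ‖iteratedFDerivWithin ℝ n h D q‖ ≤ B₁ :=
    fun q hq => (hB₀ q hq).trans (le_max_left _ _)
  have hB2ex : ∀ l : ℕ, ∃ B : ℝ, 0 ≤ B ∧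
      (l < n → ∀ q ∈ closedBall w (2 * ε), ‖iteratedFDerivWithin ℝ m (G l) D q‖ ≤ B) := by
    intro l
    by_cases hl : l < n
    · obtain ⟨B, hB⟩ := hK.exists_bound_of_continuousOn
        (((hGsm l hl.le).continuousOn_iteratedFDerivWithin (m := m)
          (by exact_mod_cast le_refl m) hUD).mono hKD)
      exact ⟨max B 0, le_max_right _ _,
        fun _ q hq => (hB q hq).trans (le_max_left _ _)⟩
    · exact ⟨0, le_rfl, fun hc => absurd hc hl⟩
  choose B2 hB20 hB2 using hB2ex
  have hsum0 : 0 ≤ ∑ l ∈ Finset.range n, B2 l := Finset.sum_nonneg fun l _ => hB20 l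
  refine ⟨B₁ + (∑ l ∈ Finset.range n, B2 l) + 1, by linarith, ε, hε0, ?_⟩
  intro z hzD hzne hzlt
  have hdx : |z.1 - w.1| < ε := by
    have := norm_fst_le (z - w)
    simp only [Prod.fst_sub] at this
    exact lt_of_le_of_lt (by simpa using this) hzlt
  have hdy : |z.2 - w.2| < ε := by
    have := norm_snd_le (z - w)
    simp only [Prod.snd_sub] at this
    exact lt_of_le_of_lt (by simpa using this) hzlt
  obtain ⟨hdx1, hdx2⟩ := abs_lt.1 hdx
  obtain ⟨hdy1, hdy2⟩ := abs_lt.1 hdy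
  -- membership facts
  have hmemK : ∀ p : ℝ × ℝ, |p.1 - w.1| ≤ ε → |p.2 - w.2| ≤ ε →
      p ∈ closedBall w (2 * ε) := by
    intro p h1 h2
    rw [mem_closedBall, Prod.dist_eq]
    rw [Real.dist_eq, Real.dist_eq]
    exact max_le (by linarith) (by linarith)
  ------------------------------------------------------------------
  -- Step 1 : Taylor in the y-direction
  ------------------------------------------------------------------
  have hO₁ : IsOpen ((fun t : ℝ => ((z.1, 0) : ℝ × ℝ) + t • ((0, 1) : ℝ × ℝ)) ⁻¹' D) :=
    hD.preimage (by fun_prop)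
  have hIcc₁ : Set.Icc (w.2 - ε) (w.2 + ε) ⊆
      (fun t : ℝ => ((z.1, 0) : ℝ × ℝ) + t • ((0, 1) : ℝ × ℝ)) ⁻¹' D := by
    intro t ht
    have : ((z.1, 0) : ℝ × ℝ) + t • ((0, 1) : ℝ × ℝ) = (z.1, t) := hpt2 z.1 t
    simp only [Set.mem_preimage, this]
    exact hKD (hmemK (z.1, t) hdx.le
      (abs_le.mpr ⟨by linarith [ht.1], by linarith [ht.2]⟩))
  have hmemD₁ : ∀ t ∈ Set.Icc (w.2 - ε) (w.2 + ε),
      ((z.1, 0) : ℝ × ℝ) + t • ((0, 1) : ℝ × ℝ) ∈ D := fun t ht => hIcc₁ ht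
  have hf₁ : ContDiffOn ℝ n (fun t => h (((z.1, 0) : ℝ × ℝ) + t • ((0, 1) : ℝ × ℝ)))
      ((fun t : ℝ => ((z.1, 0) : ℝ × ℝ) + t • ((0, 1) : ℝ × ℝ)) ⁻¹' D) :=
    (hh.of_le (by exact_mod_cast Nat.le_add_left n m)).comp
      ((contDiff_const.add (contDiff_id.smul contDiff_const)).contDiffOn)
      (fun t ht => ht)
  have hC₁ : ∀ t ∈ Set.Icc (w.2 - ε) (w.2 + ε),
      ‖iteratedDerivWithin n (fun t => h (((z.1, 0) : ℝ × ℝ) + t • ((0, 1) : ℝ × ℝ)))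
        ((fun t : ℝ => ((z.1, 0) : ℝ × ℝ) + t • ((0, 1) : ℝ × ℝ)) ⁻¹' D) t‖ ≤ B₁ := by
    intro t ht
    rw [slice_lemma ((0, 1) : ℝ × ℝ) ((z.1, 0) : ℝ × ℝ) n h D hD
      (hh.of_le (by exact_mod_cast Nat.le_add_left n m)) t (hmemD₁ t ht)]
    calc ‖iteratedFDerivWithin ℝ n h D (((z.1, 0) : ℝ × ℝ) + t • ((0, 1) : ℝ × ℝ))
          (fun _ => ((0, 1) : ℝ × ℝ))‖
        ≤ ‖iteratedFDerivWithin ℝ n h D (((z.1, 0) : ℝ × ℝ) + t • ((0, 1) : ℝ × ℝ))‖ *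
            ∏ _i : Fin n, ‖((0, 1) : ℝ × ℝ)‖ :=
          ContinuousMultilinearMap.le_opNorm _ _
      _ ≤ B₁ := by
          rw [hnorm2]
          simp only [Finset.prod_const, one_pow, mul_one]
          apply hB₁
          rw [hpt2]
          exact hmemK (z.1, t) hdx.le
            (abs_le.mpr ⟨by linarith [ht.1], by linarith [ht.2]⟩)
  have hy₂ : z.2 ∈ Set.Icc (w.2 - ε) (w.2 + ε) := ⟨by linarith, by linarith⟩
  have E₁ := taylor_bound hO₁ (n := n') hf₁ hε0 hIcc₁ hC₁ z.2 hy₂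
  -- rewrite the Taylor coefficients as values of G
  have hcoeff₁ : ∀ l ∈ Finset.range n,
      iteratedDerivWithin l (fun t => h (((z.1, 0) : ℝ × ℝ) + t • ((0, 1) : ℝ × ℝ)))
        ((fun t : ℝ => ((z.1, 0) : ℝ × ℝ) + t • ((0, 1) : ℝ × ℝ)) ⁻¹' D) w.2
        = G l (z.1, w.2) := by
    intro l hl
    have hl' : l < n := Finset.mem_range.1 hl
    rw [slice_lemma ((0, 1) : ℝ × ℝ) ((z.1, 0) : ℝ × ℝ) l h D hD
      (hh.of_le (by exact_mod_cast (by omega : l ≤ m + n))) w.2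
      (hmemD₁ w.2 ⟨by linarith, by linarith⟩)]
    rw [hpt2, hGdef]
  have E₁' : ‖h z - ∑ l ∈ Finset.range n,
      (((l.factorial : ℝ))⁻¹ * (z.2 - w.2) ^ l) • G l (z.1, w.2)‖
      ≤ B₁ * |z.2 - w.2| ^ n := by
    have e1 : (∑ l ∈ Finset.range n, (((l.factorial : ℝ))⁻¹ * (z.2 - w.2) ^ l) •
        iteratedDerivWithin l (fun t => h (((z.1, 0) : ℝ × ℝ) + t • ((0, 1) : ℝ × ℝ)))
          ((fun t : ℝ => ((z.1, 0) : ℝ × ℝ) + t • ((0, 1) : ℝ × ℝ)) ⁻¹' D) w.2)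
        = ∑ l ∈ Finset.range n,
            (((l.factorial : ℝ))⁻¹ * (z.2 - w.2) ^ l) • G l (z.1, w.2) :=
      Finset.sum_congr rfl (fun l hl => by rw [hcoeff₁ l hl])
    have e2 : h (((z.1, 0) : ℝ × ℝ) + z.2 • ((0, 1) : ℝ × ℝ)) = h z := by rw [hpt2]
    rw [← e1, ← e2]
    exact E₁
  ------------------------------------------------------------------
  -- Step 2 : Taylor in the x-direction, for each l < n
  ------------------------------------------------------------------
  have E₂ : ∀ l ∈ Finset.range n,
      ‖G l (z.1, w.2) - ∑ k ∈ Finset.range m,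
          (((k.factorial : ℝ))⁻¹ * (z.1 - w.1) ^ k) •
            iteratedFDerivWithin ℝ (k + l) h D w
              (fun i => if (i : ℕ) < k then ((1, 0) : ℝ × ℝ) else ((0, 1) : ℝ × ℝ))‖
        ≤ B2 l * |z.1 - w.1| ^ m := by
    intro l hln
    have hln' : l < n := Finset.mem_range.1 hln
    have hO₂ : IsOpen ((fun t : ℝ => ((0, w.2) : ℝ × ℝ) + t • ((1, 0) : ℝ × ℝ)) ⁻¹' D) :=
      hD.preimage (by fun_prop)
    have hmemD₂ : ∀ t ∈ Set.Icc (w.1 - ε) (w.1 + ε),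
        ((0, w.2) : ℝ × ℝ) + t • ((1, 0) : ℝ × ℝ) ∈ D := by
      intro t ht
      rw [hpt1]
      exact hKD (hmemK (t, w.2)
        (abs_le.mpr ⟨by linarith [ht.1], by linarith [ht.2]⟩)
        (by simpa using hε0.le))
    have hIcc₂ : Set.Icc (w.1 - ε) (w.1 + ε) ⊆
        (fun t : ℝ => ((0, w.2) : ℝ × ℝ) + t • ((1, 0) : ℝ × ℝ)) ⁻¹' D :=
      fun t ht => hmemD₂ t ht
    have hf₂ : ContDiffOn ℝ m (fun t => G l (((0, w.2) : ℝ × ℝ) + t • ((1, 0) : ℝ × ℝ)))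
        ((fun t : ℝ => ((0, w.2) : ℝ × ℝ) + t • ((1, 0) : ℝ × ℝ)) ⁻¹' D) :=
      (hGsm l hln'.le).comp
        ((contDiff_const.add (contDiff_id.smul contDiff_const)).contDiffOn)
        (fun t ht => ht)
    have hC₂ : ∀ t ∈ Set.Icc (w.1 - ε) (w.1 + ε),
        ‖iteratedDerivWithin m (fun t => G l (((0, w.2) : ℝ × ℝ) + t • ((1, 0) : ℝ × ℝ)))
          ((fun t : ℝ => ((0, w.2) : ℝ × ℝ) + t • ((1, 0) : ℝ × ℝ)) ⁻¹' D) t‖ ≤ B2 l := by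
      intro t ht
      rw [slice_lemma ((1, 0) : ℝ × ℝ) ((0, w.2) : ℝ × ℝ) m (G l) D hD
        (hGsm l hln'.le) t (hmemD₂ t ht)]
      calc ‖iteratedFDerivWithin ℝ m (G l) D (((0, w.2) : ℝ × ℝ) + t • ((1, 0) : ℝ × ℝ))
            (fun _ => ((1, 0) : ℝ × ℝ))‖
          ≤ ‖iteratedFDerivWithin ℝ m (G l) D
              (((0, w.2) : ℝ × ℝ) + t • ((1, 0) : ℝ × ℝ))‖ *
              ∏ _i : Fin m, ‖((1, 0) : ℝ × ℝ)‖ :=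
            ContinuousMultilinearMap.le_opNorm _ _
        _ ≤ B2 l := by
            rw [hnorm1]
            simp only [Finset.prod_const, one_pow, mul_one]
            apply hB2 l hln'
            rw [hpt1]
            exact hmemK (t, w.2)
              (abs_le.mpr ⟨by linarith [ht.1], by linarith [ht.2]⟩)
              (by simpa using hε0.le)
    have hx₂ : z.1 ∈ Set.Icc (w.1 - ε) (w.1 + ε) := ⟨by linarith, by linarith⟩
    have E := taylor_bound hO₂ (n := m') hf₂ hε0 hIcc₂ hC₂ z.1 hx₂
    have hcoeff₂ : ∀ k ∈ Finset.range m,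
        iteratedDerivWithin k (fun t => G l (((0, w.2) : ℝ × ℝ) + t • ((1, 0) : ℝ × ℝ)))
          ((fun t : ℝ => ((0, w.2) : ℝ × ℝ) + t • ((1, 0) : ℝ × ℝ)) ⁻¹' D) w.1
          = iteratedFDerivWithin ℝ (k + l) h D w
              (fun i => if (i : ℕ) < k then ((1, 0) : ℝ × ℝ) else ((0, 1) : ℝ × ℝ)) := by
      intro k hk
      have hkm : k < m := Finset.mem_range.1 hk
      rw [slice_lemma ((1, 0) : ℝ × ℝ) ((0, w.2) : ℝ × ℝ) k (G l) D hD
        ((hGsm l hln'.le).of_le (by exact_mod_cast hkm.le)) w.1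
        (hmemD₂ w.1 ⟨by linarith, by linarith⟩)]
      have hwpt : ((0, w.2) : ℝ × ℝ) + w.1 • ((1, 0) : ℝ × ℝ) = w := by
        rw [hpt1]
      rw [hwpt]
      exact (mixed_lemma k l h D hD
        (hh.of_le (by exact_mod_cast (by omega : k + l ≤ m + n))) w hw).symm
    have e1 : (∑ k ∈ Finset.range m, (((k.factorial : ℝ))⁻¹ * (z.1 - w.1) ^ k) •
        iteratedDerivWithin k (fun t => G l (((0, w.2) : ℝ × ℝ) + t • ((1, 0) : ℝ × ℝ)))
          ((fun t : ℝ => ((0, w.2) : ℝ × ℝ) + t • ((1, 0) : ℝ × ℝ)) ⁻¹' D) w.1)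
        = ∑ k ∈ Finset.range m, (((k.factorial : ℝ))⁻¹ * (z.1 - w.1) ^ k) •
            iteratedFDerivWithin ℝ (k + l) h D w
              (fun i => if (i : ℕ) < k then ((1, 0) : ℝ × ℝ) else ((0, 1) : ℝ × ℝ)) :=
      Finset.sum_congr rfl (fun k hk => by rw [hcoeff₂ k hk])
    have e2 : G l (((0, w.2) : ℝ × ℝ) + z.1 • ((1, 0) : ℝ × ℝ)) = G l (z.1, w.2) := by
      rw [hpt1]
    rw [← e1, ← e2]
    exact E
  ------------------------------------------------------------------
  -- Step 3 : assemble
  ------------------------------------------------------------------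
  set dx : ℝ := z.1 - w.1
  set dy : ℝ := z.2 - w.2
  set T : ℕ → ℕ → ℂ := fun k l => iteratedFDerivWithin ℝ (k + l) h D w
    (fun i => if (i : ℕ) < k then ((1, 0) : ℝ × ℝ) else ((0, 1) : ℝ × ℝ)) with hTdef
  set P : ℕ → ℂ := fun l => ∑ k ∈ Finset.range m,
    (((k.factorial : ℝ))⁻¹ * dx ^ k) • T k l with hPdef
  have hS : (∑ k ∈ Finset.range m, ∑ l ∈ Finset.range n,
        (((k.factorial * l.factorial : ℕ) : ℂ))⁻¹ * T k l *
          ((dx : ℝ) : ℂ) ^ k * ((dy : ℝ) : ℂ) ^ l)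
      = ∑ l ∈ Finset.range n, (((l.factorial : ℝ))⁻¹ * dy ^ l) • P l := by
    rw [Finset.sum_comm]
    refine Finset.sum_congr rfl fun l _ => ?_
    rw [hPdef, Finset.smul_sum]
    refine Finset.sum_congr rfl fun k _ => ?_
    rw [Complex.real_smul, Complex.real_smul]
    push_cast
    ring
  have hsplit : h z - (∑ k ∈ Finset.range m, ∑ l ∈ Finset.range n,
        (((k.factorial * l.factorial : ℕ) : ℂ))⁻¹ * T k l *
          ((dx : ℝ) : ℂ) ^ k * ((dy : ℝ) : ℂ) ^ l)
      = (h z - ∑ l ∈ Finset.range n, (((l.factorial : ℝ))⁻¹ * dy ^ l) • G l (z.1, w.2))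
        + ∑ l ∈ Finset.range n,
            (((l.factorial : ℝ))⁻¹ * dy ^ l) • (G l (z.1, w.2) - P l) := by
    rw [hS]
    simp only [smul_sub, Finset.sum_sub_distrib]
    abel
  have habs : ∀ l : ℕ, |((l.factorial : ℝ))⁻¹ * dy ^ l| ≤ 1 := by
    intro l
    rw [abs_mul, abs_pow]
    have h1 : |((l.factorial : ℝ))⁻¹| ≤ 1 := by
      rw [abs_inv, Nat.abs_cast, inv_le_one_iff₀]
      exact Or.inr (by exact_mod_cast l.factorial_pos)
    have h2 : |dy| ^ l ≤ 1 := pow_le_one₀ (abs_nonneg _) (by linarith)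
    calc |((l.factorial : ℝ))⁻¹| * |dy| ^ l ≤ 1 * 1 :=
          mul_le_mul h1 h2 (by positivity) zero_le_one
      _ = 1 := mul_one 1
  have hmax1 : |dx| ^ m ≤ max (|dx| ^ m) (|dy| ^ n) := le_max_left _ _
  have hmax2 : |dy| ^ n ≤ max (|dx| ^ m) (|dy| ^ n) := le_max_right _ _
  have hmax0 : 0 ≤ max (|dx| ^ m) (|dy| ^ n) :=
    le_trans (by positivity) hmax1
  calc ‖h z - (∑ k ∈ Finset.range m, ∑ l ∈ Finset.range n,
        (((k.factorial * l.factorial : ℕ) : ℂ))⁻¹ * T k l *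
          ((dx : ℝ) : ℂ) ^ k * ((dy : ℝ) : ℂ) ^ l)‖
      ≤ ‖h z - ∑ l ∈ Finset.range n, (((l.factorial : ℝ))⁻¹ * dy ^ l) • G l (z.1, w.2)‖
        + ‖∑ l ∈ Finset.range n,
            (((l.factorial : ℝ))⁻¹ * dy ^ l) • (G l (z.1, w.2) - P l)‖ := by
        rw [hsplit]; exact norm_add_le _ _
    _ ≤ B₁ * |dy| ^ n + ∑ l ∈ Finset.range n, B2 l * |dx| ^ m := by
        refine add_le_add E₁' ?_
        calc ‖∑ l ∈ Finset.range n,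
            (((l.factorial : ℝ))⁻¹ * dy ^ l) • (G l (z.1, w.2) - P l)‖
            ≤ ∑ l ∈ Finset.range n,
                ‖(((l.factorial : ℝ))⁻¹ * dy ^ l) • (G l (z.1, w.2) - P l)‖ :=
              norm_sum_le _ _
          _ ≤ ∑ l ∈ Finset.range n, B2 l * |dx| ^ m := by
              refine Finset.sum_le_sum fun l hl => ?_
              rw [norm_smul, Real.norm_eq_abs]
              calc |((l.factorial : ℝ))⁻¹ * dy ^ l| * ‖G l (z.1, w.2) - P l‖
                  ≤ 1 * (B2 l * |dx| ^ m) :=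
                    mul_le_mul (habs l) (E₂ l hl) (norm_nonneg _) zero_le_one
                _ = B2 l * |dx| ^ m := one_mul _
    _ ≤ B₁ * max (|dx| ^ m) (|dy| ^ n)
        + ∑ l ∈ Finset.range n, B2 l * max (|dx| ^ m) (|dy| ^ n) := by
        refine add_le_add (mul_le_mul_of_nonneg_left hmax2 hB₁0) ?_
        exact Finset.sum_le_sum fun l hl => mul_le_mul_of_nonneg_left hmax1 (hB20 l)
    _ = (B₁ + ∑ l ∈ Finset.range n, B2 l) * max (|dx| ^ m) (|dy| ^ n) := by
        rw [← Finset.sum_mul, add_mul]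
    _ ≤ (B₁ + (∑ l ∈ Finset.range n, B2 l) + 1) * max (|dx| ^ m) (|dy| ^ n) := by
        have hsum0 : 0 ≤ ∑ l ∈ Finset.range n, B2 l :=
          Finset.sum_nonneg fun l _ => hB20 l
        nlinarith [hmax0]
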